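/- For each M ∈ A, the assignment σ ⊗ ω ↦ ω(∫_M(σ)) descends to a well-defined K-linear map eval_∫ : P^∞(M) → ℂ, and for every morphism f : M → M' in Q̃A the diagram commutes: eval_∫ ∘ P^∞(f) = eval_∫ as maps P^∞(M) → ℂ. -/

import Mathlib

set_option maxHeartbeats 1000000
set_option synthInstance.maxHeartbeats 400000

open CategoryTheory CategoryTheory.Limits Module TensorProduct

universe v u

attribute [local instance] CategoryTheory.Abelian.hasFiniteBiproducts

/-- A fiber functor on a `ℚ`-linear Abelian category, defined over a field `F ⊇ ℚ`:
a `ℚ`-linear, exact, faithful functor into finite-dimensional `F`-vector spaces. -/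
structure FiberFunctor (A : Type u) [Category.{v} A] [Abelian A] [CategoryTheory.Linear ℚ A]
    (F : Type) [Field F] [Algebra ℚ F] where
  H : A ⥤ ModuleCat.{0} F
  additive : H.Additive
  linear : ∀ (q : ℚ) {M N : A} (f : M ⟶ N), H.map (q • f) = (algebraMap ℚ F q) • H.map f
  exact_left : Limits.PreservesFiniteLimits H
  exact_right : Limits.PreservesFiniteColimits H
  faithful : H.Faithful
  finDim : ∀ M : A, FiniteDimensional F (H.obj M)

variable (A : Type u) [Category.{v} A] [Abelian A] [CategoryTheory.Linear ℚ A]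
variable (K : Subfield ℂ)
variable (HB : FiberFunctor A ℚ) (HdR : FiberFunctor A ↥K)

/-- The index type of the free module on symbols `(M, σ, ω)`. -/
abbrev PIdx := Σ M : A, (HB.H.obj M) × Module.Dual ↥K (HdR.H.obj M)

/-- The free `K`-module on symbols `(M, σ, ω)`. -/
abbrev FreeMod := PIdx A K HB HdR →₀ ↥K

/-- Generators of the relations defining `P(A)` as a quotient of the free `K`-module on
symbols `(σ ⊗ ω)_M`: bilinearity relations (making the quotient by them the direct sum
`⊕_M H_B(M) ⊗_ℚ H_dR(M)^∨`) together with the period relations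
`(σ ⊗ α^∨(ω))_M = (α(σ) ⊗ ω)_N` for morphisms `α : M ⟶ N`. -/
def RelGen (x : FreeMod A K HB HdR) : Prop :=
  (∃ (M : A) (σ σ' : HB.H.obj M) (ω : Module.Dual ↥K (HdR.H.obj M)),
      x = Finsupp.single ⟨M, (σ + σ', ω)⟩ 1 - Finsupp.single ⟨M, (σ, ω)⟩ 1
            - Finsupp.single ⟨M, (σ', ω)⟩ 1) ∨
  (∃ (M : A) (σ : HB.H.obj M) (ω ω' : Module.Dual ↥K (HdR.H.obj M)),
      x = Finsupp.single ⟨M, (σ, ω + ω')⟩ 1 - Finsupp.single ⟨M, (σ, ω)⟩ 1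
            - Finsupp.single ⟨M, (σ, ω')⟩ 1) ∨
  (∃ (M : A) (q : ℚ) (σ : HB.H.obj M) (ω : Module.Dual ↥K (HdR.H.obj M)),
      x = Finsupp.single ⟨M, (q • σ, ω)⟩ 1 - Finsupp.single ⟨M, (σ, ω)⟩ (algebraMap ℚ ↥K q)) ∨
  (∃ (M : A) (c : ↥K) (σ : HB.H.obj M) (ω : Module.Dual ↥K (HdR.H.obj M)),
      x = Finsupp.single ⟨M, (σ, c • ω)⟩ 1 - Finsupp.single ⟨M, (σ, ω)⟩ c) ∨
  (∃ (M N : A) (α : M ⟶ N) (σ : HB.H.obj M) (ω : Module.Dual ↥K (HdR.H.obj N)),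
      x = Finsupp.single ⟨M, (σ, ω.comp (HdR.H.map α).hom)⟩ 1
            - Finsupp.single ⟨N, (HB.H.map α σ, ω)⟩ 1)

/-- The submodule of relations defining `P(A)`. -/
noncomputable def PRel : Submodule ↥K (FreeMod A K HB HdR) :=
  Submodule.span ↥K {x | RelGen A K HB HdR x}

/-- The space of formal periods `P(A)`. -/
abbrev PA := FreeMod A K HB HdR ⧸ PRel A K HB HdR

/-- The class of the formal period `(σ ⊗ ω)_M` in `P(A)`. -/
noncomputable def per (M : A) (σ : HB.H.obj M) (ω : Module.Dual ↥K (HdR.H.obj M)) :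
    PA A K HB HdR :=
  Submodule.Quotient.mk (Finsupp.single ⟨M, (σ, ω)⟩ 1)

/-- `P(M)`: the image of `H_B(M) ⊗_ℚ H_dR(M)^∨` in `P(A)`. -/
noncomputable def PM (M : A) : Submodule ↥K (PA A K HB HdR) :=
  Submodule.span ↥K {x | ∃ σ ω, x = per A K HB HdR M σ ω}

/-- The `m`-th power `M^m` of an object. -/
noncomputable abbrev pow (M : A) (m : ℕ) : A := ⨁ (fun _ : Fin m => M)

/-- The free `K`-module on symbols `σ ⊗ ω` for a single object `M`,
of which `H_B(M) ⊗_ℚ H_dR(M)^∨` is the quotient by the bilinearity relations. -/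
abbrev FreeModM (M : A) := ((HB.H.obj M) × Module.Dual ↥K (HdR.H.obj M)) →₀ ↥K

/-- Generators of the relations defining `P^k(M)` (`k ∈ ℕ ∪ {∞}`, encoded as `k : ℕ∞`):
bilinearity relations together with the depth `≤ k` relations `∑_{i=1}^m σ_i ⊗ ω_i = 0`
for every exact sequence `0 → N' → M^m → N → 0` with `m ≤ k`, `(σ_i) ∈ H_B(N')` and
`(ω_i) ∈ H_dR(N)^∨`. -/
def RelGenDepth (M : A) (k : ℕ∞) (x : FreeModM A K HB HdR M) : Prop :=
  (∃ (σ σ' : HB.H.obj M) (ω : Module.Dual ↥K (HdR.H.obj M)),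
      x = Finsupp.single (σ + σ', ω) 1 - Finsupp.single (σ, ω) 1 - Finsupp.single (σ', ω) 1) ∨
  (∃ (σ : HB.H.obj M) (ω ω' : Module.Dual ↥K (HdR.H.obj M)),
      x = Finsupp.single (σ, ω + ω') 1 - Finsupp.single (σ, ω) 1 - Finsupp.single (σ, ω') 1) ∨
  (∃ (q : ℚ) (σ : HB.H.obj M) (ω : Module.Dual ↥K (HdR.H.obj M)),
      x = Finsupp.single (q • σ, ω) 1 - Finsupp.single (σ, ω) (algebraMap ℚ ↥K q)) ∨
  (∃ (c : ↥K) (σ : HB.H.obj M) (ω : Module.Dual ↥K (HdR.H.obj M)),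
      x = Finsupp.single (σ, c • ω) 1 - Finsupp.single (σ, ω) c) ∨
  (∃ (m : ℕ), 1 ≤ m ∧ (m : ℕ∞) ≤ k ∧
    ∃ (N' N : A) (f : N' ⟶ pow A M m) (g : pow A M m ⟶ N) (w : f ≫ g = 0),
      (ShortComplex.mk f g w).ShortExact ∧
      ∃ (s : HB.H.obj N') (ω' : Module.Dual ↥K (HdR.H.obj N)),
        x = ∑ j : Fin m,
          Finsupp.single
            (HB.H.map (f ≫ biproduct.π (fun _ : Fin m => M) j) s,
             ω'.comp (HdR.H.map (biproduct.ι (fun _ : Fin m => M) j ≫ g)).hom) 1)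

/-- The submodule of relations defining `P^k(M)`. -/
noncomputable def PRelDepth (M : A) (k : ℕ∞) : Submodule ↥K (FreeModM A K HB HdR M) :=
  Submodule.span ↥K {x | RelGenDepth A K HB HdR M k x}

/-- The space `P^k(M)` of formal periods of depth `k` of `M`; `P^∞(M)` is `PkM M ⊤`. -/
abbrev PkM (M : A) (k : ℕ∞) := FreeModM A K HB HdR M ⧸ PRelDepth A K HB HdR M k

/-- The canonical map from the free module on symbols `σ ⊗ ω` at `M` to the one on all
symbols `(σ ⊗ ω)_N`, inducing the canonical map `P^∞(M) → P(A)`. -/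
noncomputable def toFree (M : A) : FreeModM A K HB HdR M →ₗ[↥K] FreeMod A K HB HdR :=
  Finsupp.lmapDomain ↥K ↥K (fun t => (⟨M, t⟩ : PIdx A K HB HdR))

/-- A span `M ⟵p N ⟶i M'` with `p` an epimorphism and `i` a monomorphism; such spans
(up to equivalence) are the morphisms `M ⟶ M'` of the category `Q̃A`, and the functor
`P^∞` takes the class of the span to the map `P^∞(M) → P^∞(M')` sending `σ ⊗ ω` to
`H_B(i)(σ') ⊗ ω'` whenever `H_B(p)(σ') = σ` and `ω' ∘ H_dR(i) = ω ∘ H_dR(p)`. -/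
structure QSpan (M M' : A) where
  N : A
  p : N ⟶ M
  i : N ⟶ M'
  epi : Epi p
  mono : Mono i

/-- A concrete theory of periods: a natural isomorphism `∫ : H_B ⊗_ℚ ℂ ≅ H_dR ⊗_K ℂ`. -/
structure PeriodPairing where
  int : ∀ M : A, (ℂ ⊗[ℚ] HB.H.obj M) ≃ₗ[ℂ] (ℂ ⊗[↥K] HdR.H.obj M)
  naturality : ∀ {M N : A} (f : M ⟶ N),
    (int N).toLinearMap ∘ₗ LinearMap.baseChange ℂ (HB.H.map f).hom
      = LinearMap.baseChange ℂ (HdR.H.map f).hom ∘ₗ (int M).toLinearMap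

/-- `∫_σ ω = ω(∫_M(σ))`. -/
noncomputable def evalInt (P : PeriodPairing A K HB HdR) (M : A) (σ : HB.H.obj M)
    (ω : Module.Dual ↥K (HdR.H.obj M)) : ℂ :=
  (TensorProduct.rid ↥K ℂ) ((LinearMap.baseChange ℂ ω) ((P.int M) ((1 : ℂ) ⊗ₜ[ℚ] σ)))

/-- The evaluation map on the free module on symbols `σ ⊗ ω` at `M`. -/
noncomputable def evalFreeM (P : PeriodPairing A K HB HdR) (M : A) :
    FreeModM A K HB HdR M →ₗ[↥K] ℂ :=
  Finsupp.lift ℂ ↥K _ (fun t => evalInt A K HB HdR P M t.1 t.2)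


section Aux

lemma rid_baseChange_zero (M : A) (x : ℂ ⊗[↥K] ↑(HdR.H.obj M)) :
    TensorProduct.rid ↥K ℂ (LinearMap.baseChange ℂ
      (0 : Module.Dual ↥K (HdR.H.obj M)) x) = 0 := by
  rw [LinearMap.baseChange_zero, LinearMap.zero_apply]
  exact (TensorProduct.rid ↥K ℂ).map_zero

lemma rid_baseChange_add (M : A) (ω ω' : Module.Dual ↥K (HdR.H.obj M))
    (x : ℂ ⊗[↥K] ↑(HdR.H.obj M)) :
    TensorProduct.rid ↥K ℂ (LinearMap.baseChange ℂ (ω + ω') x)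
      = TensorProduct.rid ↥K ℂ (LinearMap.baseChange ℂ ω x)
        + TensorProduct.rid ↥K ℂ (LinearMap.baseChange ℂ ω' x) := by
  rw [LinearMap.baseChange_add, LinearMap.add_apply]
  exact (TensorProduct.rid ↥K ℂ).map_add _ _

lemma rid_baseChange_smul (M : A) (c : ↥K) (ω : Module.Dual ↥K (HdR.H.obj M))
    (x : ℂ ⊗[↥K] ↑(HdR.H.obj M)) :
    TensorProduct.rid ↥K ℂ (LinearMap.baseChange ℂ (c • ω) x)
      = c • TensorProduct.rid ↥K ℂ (LinearMap.baseChange ℂ ω x) := by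
  rw [LinearMap.baseChange_smul, LinearMap.smul_apply]
  exact (TensorProduct.rid ↥K ℂ).map_smul c _


lemma evalInt_zero_right (P : PeriodPairing A K HB HdR) (M : A) (σ : HB.H.obj M) :
    evalInt A K HB HdR P M σ 0 = 0 :=
  rid_baseChange_zero A K HdR M _

lemma evalInt_add_right (P : PeriodPairing A K HB HdR) (M : A) (σ : HB.H.obj M)
    (ω ω' : Module.Dual ↥K (HdR.H.obj M)) :
    evalInt A K HB HdR P M σ (ω + ω')
      = evalInt A K HB HdR P M σ ω + evalInt A K HB HdR P M σ ω' :=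
  rid_baseChange_add A K HdR M ω ω' _

lemma evalInt_smul_right (P : PeriodPairing A K HB HdR) (M : A) (c : ↥K) (σ : HB.H.obj M)
    (ω : Module.Dual ↥K (HdR.H.obj M)) :
    evalInt A K HB HdR P M σ (c • ω) = c • evalInt A K HB HdR P M σ ω :=
  rid_baseChange_smul A K HdR M c ω _

lemma evalInt_sum_right (P : PeriodPairing A K HB HdR) (M : A) (σ : HB.H.obj M)
    {ι : Type} (s : Finset ι) (ω : ι → Module.Dual ↥K (HdR.H.obj M)) :
    evalInt A K HB HdR P M σ (∑ j ∈ s, ω j) = ∑ j ∈ s, evalInt A K HB HdR P M σ (ω j) := by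
  classical
  induction s using Finset.induction_on with
  | empty =>
      rw [Finset.sum_empty, Finset.sum_empty]
      exact evalInt_zero_right A K HB HdR P M σ
  | @insert j s hj ih =>
      rw [Finset.sum_insert hj, Finset.sum_insert hj, evalInt_add_right, ih]

lemma rid_csmul (c : ℂ) (y : ℂ ⊗[↥K] ↥K) :
    TensorProduct.rid ↥K ℂ (c • y) = c * TensorProduct.rid ↥K ℂ y := by
  induction y using TensorProduct.induction_on with
  | zero => rw [smul_zero, (TensorProduct.rid ↥K ℂ).map_zero, mul_zero]
  | tmul z k =>
      rw [TensorProduct.smul_tmul', TensorProduct.rid_tmul, TensorProduct.rid_tmul]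
      show (k : ℂ) * (c • z) = c * ((k : ℂ) * z)
      rw [smul_eq_mul]; ring
  | add a b ha hb =>
      rw [smul_add, (TensorProduct.rid ↥K ℂ).map_add, (TensorProduct.rid ↥K ℂ).map_add,
        ha, hb, mul_add]

lemma evalInt_natural (P : PeriodPairing A K HB HdR) {M N : A} (α : M ⟶ N)
    (σ : HB.H.obj M) (ω : Module.Dual ↥K (HdR.H.obj N)) :
    evalInt A K HB HdR P N (HB.H.map α σ) ω
      = evalInt A K HB HdR P M σ (ω.comp (HdR.H.map α).hom) := by
  unfold evalInt
  have h1 : (1:ℂ) ⊗ₜ[ℚ] (HB.H.map α σ)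
      = LinearMap.baseChange ℂ (HB.H.map α).hom ((1:ℂ) ⊗ₜ[ℚ] σ) := by
    rw [LinearMap.baseChange_tmul]
  have h2 := LinearMap.congr_fun (P.naturality α) ((1:ℂ) ⊗ₜ[ℚ] σ)
  simp only [LinearMap.comp_apply, LinearEquiv.coe_coe] at h2
  rw [h1, h2, ← LinearMap.comp_apply, ← LinearMap.baseChange_comp]

lemma evalInt_add_left (P : PeriodPairing A K HB HdR) (M : A) (σ σ' : HB.H.obj M)
    (ω : Module.Dual ↥K (HdR.H.obj M)) :
    evalInt A K HB HdR P M (σ + σ') ω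
      = evalInt A K HB HdR P M σ ω + evalInt A K HB HdR P M σ' ω := by
  unfold evalInt
  rw [TensorProduct.tmul_add, (P.int M).map_add, (LinearMap.baseChange ℂ ω).map_add,
    (TensorProduct.rid ↥K ℂ).map_add]

lemma evalInt_qsmul (P : PeriodPairing A K HB HdR) (M : A) (q : ℚ) (σ : HB.H.obj M)
    (ω : Module.Dual ↥K (HdR.H.obj M)) :
    evalInt A K HB HdR P M (q • σ) ω
      = algebraMap ℚ ↥K q • evalInt A K HB HdR P M σ ω := by
  unfold evalInt
  have h1 : (1:ℂ) ⊗ₜ[ℚ] (q • σ) = (algebraMap ℚ ℂ q) • ((1:ℂ) ⊗ₜ[ℚ] σ) := by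
    rw [TensorProduct.tmul_smul, algebraMap_smul]
  rw [h1, (P.int M).map_smul, (LinearMap.baseChange ℂ ω).map_smul, rid_csmul]
  show _ = ((algebraMap ℚ ↥K q : ↥K) : ℂ) * _
  congr 1

lemma dual_comp {X Y Z : A} (a : X ⟶ Y) (b : Y ⟶ Z)
    (ω : Module.Dual ↥K (HdR.H.obj Z)) :
    ω.comp (HdR.H.map (a ≫ b)).hom = (ω.comp (HdR.H.map b).hom).comp (HdR.H.map a).hom := by
  rw [Functor.map_comp]; rfl

lemma evalFreeM_single (P : PeriodPairing A K HB HdR) (M : A)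
    (t : (HB.H.obj M) × Module.Dual ↥K (HdR.H.obj M)) (c : ↥K) :
    evalFreeM A K HB HdR P M (Finsupp.single t c)
      = c • evalInt A K HB HdR P M t.1 t.2 := by
  rw [evalFreeM, Finsupp.lift_apply, Finsupp.sum_single_index (zero_smul ↥K (evalInt A K HB HdR P M t.1 t.2))]

end Aux

/-- **Proposition (`PROPQ`, second part).** For each `M ∈ A` the assignment
`σ ⊗ ω ↦ ω(∫_M(σ))` kills all the relations defining `P^∞(M)`, hence descends to a
well-defined `K`-linear map `eval_∫ : P^∞(M) → ℂ`; and for every morphism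
`f : M ⟶ M'` of `Q̃A` (given by a span `(p : N ↠ M, i : N ↪ M')`) the triangle commutes:
`eval_∫ ∘ P^∞(f) = eval_∫` (expressed on generators, `P^∞(f)` sending `σ ⊗ ω` to
`H_B(i)(σ') ⊗ ω'` whenever `H_B(p)(σ') = σ` and `ω' ∘ H_dR(i) = ω ∘ H_dR(p)`). -/
theorem evalInt_descends_and_commutes (P : PeriodPairing A K HB HdR) :
    (∀ (M : A), PRelDepth A K HB HdR M ⊤ ≤
        LinearMap.ker (evalFreeM A K HB HdR P M)) ∧
    (∀ (M M' : A) (s : QSpan A M M') (σ : HB.H.obj M)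
        (ω : Module.Dual ↥K (HdR.H.obj M)) (σ' : HB.H.obj s.N)
        (ω' : Module.Dual ↥K (HdR.H.obj M')),
        HB.H.map s.p σ' = σ → ω'.comp (HdR.H.map s.i).hom = ω.comp (HdR.H.map s.p).hom →
        evalInt A K HB HdR P M' (HB.H.map s.i σ') ω' = evalInt A K HB HdR P M σ ω) := by
  haveI : HdR.H.Additive := HdR.additive
  constructor
  · intro M
    rw [PRelDepth, Submodule.span_le]
    rintro x hx
    simp only [SetLike.mem_coe, LinearMap.mem_ker]
    obtain h | h | h | h | h := hx
    · obtain ⟨σ, σ', ω, rfl⟩ := h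
      simp only [LinearMap.map_sub, evalFreeM_single, one_smul, evalInt_add_left]
      ring
    · obtain ⟨σ, ω, ω', rfl⟩ := h
      simp only [LinearMap.map_sub, evalFreeM_single, one_smul, evalInt_add_right]
      ring
    · obtain ⟨q, σ, ω, rfl⟩ := h
      simp only [LinearMap.map_sub, evalFreeM_single, one_smul, evalInt_qsmul]
      exact sub_self _
    · obtain ⟨c, σ, ω, rfl⟩ := h
      simp only [LinearMap.map_sub, evalFreeM_single, one_smul, evalInt_smul_right]
      exact sub_self _
    · obtain ⟨m, -, -, N', N, f, g, w, -, s, ω', rfl⟩ := h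
      rw [map_sum (evalFreeM A K HB HdR P M) _ Finset.univ]
      have hj : ∀ j : Fin m,
          evalFreeM A K HB HdR P M (Finsupp.single
            (HB.H.map (f ≫ biproduct.π (fun _ : Fin m => M) j) s,
             ω'.comp (HdR.H.map (biproduct.ι (fun _ : Fin m => M) j ≫ g)).hom) 1)
          = evalInt A K HB HdR P N' s
              (ω'.comp (HdR.H.map ((f ≫ biproduct.π (fun _ : Fin m => M) j) ≫
                (biproduct.ι (fun _ : Fin m => M) j ≫ g))).hom) := by
        intro j
        rw [evalFreeM_single, one_smul, evalInt_natural,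
          dual_comp A K HdR (f ≫ biproduct.π (fun _ : Fin m => M) j)
            (biproduct.ι (fun _ : Fin m => M) j ≫ g) ω']
      rw [Finset.sum_congr rfl (fun j _ => hj j), ← evalInt_sum_right]
      have hc : (∑ j : Fin m, (f ≫ biproduct.π (fun _ : Fin m => M) j) ≫
          (biproduct.ι (fun _ : Fin m => M) j ≫ g)) = (0 : N' ⟶ N) := by
        have h4 : ∀ j : Fin m, (f ≫ biproduct.π (fun _ : Fin m => M) j) ≫
            (biproduct.ι (fun _ : Fin m => M) j ≫ g)
            = f ≫ ((biproduct.π (fun _ : Fin m => M) j ≫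
                biproduct.ι (fun _ : Fin m => M) j) ≫ g) := by
          intro j
          simp only [Category.assoc]
        rw [Finset.sum_congr rfl (fun j _ => h4 j), ← Preadditive.comp_sum,
          ← Preadditive.sum_comp, biproduct.total, Category.id_comp, w]
      have hsum : (∑ j : Fin m,
          ω'.comp (HdR.H.map ((f ≫ biproduct.π (fun _ : Fin m => M) j) ≫
            (biproduct.ι (fun _ : Fin m => M) j ≫ g))).hom) = 0 := by
        have h2 : (∑ j : Fin m,
            ω'.comp (HdR.H.map ((f ≫ biproduct.π (fun _ : Fin m => M) j) ≫
              (biproduct.ι (fun _ : Fin m => M) j ≫ g))).hom)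
            = ω'.comp (∑ j : Fin m, HdR.H.map ((f ≫ biproduct.π (fun _ : Fin m => M) j) ≫
              (biproduct.ι (fun _ : Fin m => M) j ≫ g))).hom := by
          ext v
          rw [ModuleCat.hom_sum, LinearMap.sum_apply, LinearMap.comp_apply, LinearMap.sum_apply, map_sum ω' _ Finset.univ]
          simp only [LinearMap.comp_apply]
        rw [h2, ← HdR.H.map_sum, hc, HdR.H.map_zero, ModuleCat.hom_zero]
        exact LinearMap.comp_zero _
      rw [hsum]
      exact evalInt_zero_right A K HB HdR P N' s
  · intro M M' s σ ω σ' ω' h1 h2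
    rw [evalInt_natural, h2, ← evalInt_natural, h1]
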